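/- For every integer k > 2, there exists a unary MA-PFA M that verifies the language UPOLY(k) = { a^(i^k) : i ≥ 0 } with cutpoint 1/2 using certificates of length n^(1/k) for members: for every i ≥ 0, Acc(i, i^k) > 1/2, and for every n that is not a k-th power and every i ≥ 0, Acc(i, n) ≤ 1/2. -/

import Mathlib

open Matrix

/-- A column-stochastic real matrix: nonnegative entries, every column sums to 1. -/
def ColStochastic {m : ℕ} (A : Matrix (Fin m) (Fin m) ℝ) : Prop :=
  (∀ i j, 0 ≤ A i j) ∧ ∀ j, ∑ i, A i j = 1

/-- The first standard basis column vector `e₁`. -/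
def e1 (m : ℕ) : Fin m → ℝ := fun j => if j.val = 0 then 1 else 0

/-- Acceptance probability of a unary MA-PFA with transition matrices
`Ao` (◐), `Aa` (letter a), `Acl` (◑), `Ace` (¢), `Ad` ($) and accepting states `F`,
on certificate `a^i` and input `a^n`. -/
noncomputable def pfaAcc {m : ℕ} (Ao Aa Acl Ace Ad : Matrix (Fin m) (Fin m) ℝ)
    (F : Finset (Fin m)) (i n : ℕ) : ℝ :=
  ∑ j ∈ F, (Ad * Aa ^ n * Ace * Acl * Aa ^ i * Ao).mulVec (e1 m) j


namespace MAPFA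

variable {D : ℕ}

/-- Split a sum over `Fin (D+2)` into the first `D` coordinates and the last two. -/
lemma sum_split (f : Fin (D+2) → ℝ) :
    ∑ j, f j = (∑ j : Fin D, f ⟨j.val, by omega⟩) + f ⟨D, by omega⟩ + f ⟨D+1, by omega⟩ := by
  rw [Fin.sum_univ_castSucc, Fin.sum_univ_castSucc]
  rfl

/-- Padding of a matrix with two extra states making all row and column sums zero. -/
def padM (A : Matrix (Fin (D+2)) (Fin (D+2)) ℝ) : Matrix (Fin (D+2)) (Fin (D+2)) ℝ :=
  Matrix.of fun i j =>
    if i.val = D then 0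
    else if j.val = D+1 then 0
    else if i.val = D+1 then (if j.val = D then ∑ a, ∑ b, A a b else -(∑ a, A a j))
    else if j.val = D then -(∑ b, A i b)
    else A i j

def MidSupp (A : Matrix (Fin (D+2)) (Fin (D+2)) ℝ) : Prop :=
  ∀ i j : Fin (D+2), D ≤ i.val ∨ D ≤ j.val → A i j = 0

lemma padM_apply_mid (A : Matrix (Fin (D+2)) (Fin (D+2)) ℝ) {i j : Fin (D+2)}
    (hi : i.val < D) (hj : j.val < D) : padM A i j = A i j := by
  simp only [padM, Matrix.of_apply]
  split_ifs <;> first | rfl | omega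

lemma padM_apply_rowp (A : Matrix (Fin (D+2)) (Fin (D+2)) ℝ) {i j : Fin (D+2)}
    (hi : i.val = D) : padM A i j = 0 := by
  simp only [padM, Matrix.of_apply]
  split_ifs <;> first | rfl | omega

lemma padM_apply_colq (A : Matrix (Fin (D+2)) (Fin (D+2)) ℝ) {i j : Fin (D+2)}
    (hj : j.val = D + 1) : padM A i j = 0 := by
  simp only [padM, Matrix.of_apply]
  split_ifs <;> first | rfl | omega

lemma padM_apply_colp (A : Matrix (Fin (D+2)) (Fin (D+2)) ℝ) {i j : Fin (D+2)}
    (hi : i.val < D) (hj : j.val = D) : padM A i j = -(∑ b, A i b) := by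
  simp only [padM, Matrix.of_apply]
  split_ifs <;> first | rfl | omega

lemma padM_apply_qmid (A : Matrix (Fin (D+2)) (Fin (D+2)) ℝ) {i j : Fin (D+2)}
    (hi : i.val = D + 1) (hj : j.val < D) : padM A i j = -(∑ a, A a j) := by
  simp only [padM, Matrix.of_apply]
  split_ifs <;> first | rfl | omega

lemma padM_apply_qp (A : Matrix (Fin (D+2)) (Fin (D+2)) ℝ) {i j : Fin (D+2)}
    (hi : i.val = D + 1) (hj : j.val = D) : padM A i j = ∑ a, ∑ b, A a b := by
  simp only [padM, Matrix.of_apply]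
  split_ifs <;> first | rfl | omega

lemma padM_rowsum (A : Matrix (Fin (D+2)) (Fin (D+2)) ℝ) (hA : MidSupp A) (i : Fin (D+2)) :
    ∑ j, padM A i j = 0 := by
  have hi : i.val < D ∨ i.val = D ∨ i.val = D + 1 := by omega
  rcases hi with hi | hi | hi
  · rw [sum_split]
    rw [Finset.sum_congr rfl (fun (j : Fin D) _ => padM_apply_mid A hi (show (⟨j.val, by omega⟩ : Fin (D+2)).val < D from j.isLt)),
      padM_apply_colp A hi rfl, padM_apply_colq A rfl]
    rw [sum_split (fun b => A i b)]
    rw [hA i ⟨D, by omega⟩ (Or.inr (by simp)), hA i ⟨D+1, by omega⟩ (Or.inr (by simp))]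
    ring
  · simp [fun j => padM_apply_rowp A (j := j) hi]
  · rw [sum_split]
    rw [Finset.sum_congr rfl (fun (j : Fin D) _ => padM_apply_qmid A hi (show (⟨j.val, by omega⟩ : Fin (D+2)).val < D from j.isLt)),
      padM_apply_qp A hi rfl, padM_apply_colq A rfl, (Finset.sum_comm : ∑ a, ∑ b, A a b = ∑ b, ∑ a, A a b)]
    rw [sum_split (fun b => ∑ a, A a b)]
    rw [Finset.sum_eq_zero (fun a _ => hA a ⟨D, by omega⟩ (Or.inr (by simp))),
      Finset.sum_eq_zero (fun a _ => hA a ⟨D+1, by omega⟩ (Or.inr (by simp)))]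
    simp

lemma padM_colsum (A : Matrix (Fin (D+2)) (Fin (D+2)) ℝ) (hA : MidSupp A) (j : Fin (D+2)) :
    ∑ i, padM A i j = 0 := by
  have hj : j.val < D ∨ j.val = D ∨ j.val = D + 1 := by omega
  rcases hj with hj | hj | hj
  · rw [sum_split]
    rw [Finset.sum_congr rfl (fun (i : Fin D) _ => padM_apply_mid A (show (⟨i.val, by omega⟩ : Fin (D+2)).val < D from i.isLt) hj),
      padM_apply_rowp A rfl, padM_apply_qmid A rfl hj]
    rw [sum_split (fun a => A a j)]
    rw [hA ⟨D, by omega⟩ j (Or.inl (by simp)), hA ⟨D+1, by omega⟩ j (Or.inl (by simp))]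
    ring
  · rw [sum_split]
    rw [Finset.sum_congr rfl (fun (i : Fin D) _ => padM_apply_colp A (show (⟨i.val, by omega⟩ : Fin (D+2)).val < D from i.isLt) hj),
      padM_apply_rowp A rfl, padM_apply_qp A rfl hj]
    rw [sum_split (fun a => ∑ b, A a b)]
    rw [Finset.sum_eq_zero (fun b _ => hA ⟨D, by omega⟩ b (Or.inl (by simp))),
      Finset.sum_eq_zero (fun b _ => hA ⟨D+1, by omega⟩ b (Or.inl (by simp)))]
    simp
  · simp [fun i => padM_apply_colq A (i := i) hj]

lemma padM_mulVec_p (A : Matrix (Fin (D+2)) (Fin (D+2)) ℝ) (v : Fin (D+2) → ℝ) :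
    (padM A *ᵥ v) ⟨D, by omega⟩ = 0 := by
  simp only [Matrix.mulVec, dotProduct]
  exact Finset.sum_eq_zero fun j _ => by rw [padM_apply_rowp A rfl, zero_mul]

lemma padM_mulVec_mid (A : Matrix (Fin (D+2)) (Fin (D+2)) ℝ) (hA : MidSupp A)
    (v : Fin (D+2) → ℝ) (hv : v ⟨D, by omega⟩ = 0) {i : Fin (D+2)} (hi : i.val < D) :
    (padM A *ᵥ v) i = (A *ᵥ v) i := by
  simp only [Matrix.mulVec, dotProduct]
  apply Finset.sum_congr rfl
  intro j _
  have hj : j.val < D ∨ j.val = D ∨ j.val = D + 1 := by omega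
  rcases hj with hj | hj | hj
  · rw [padM_apply_mid A hi hj]
  · have hvj : v j = 0 := by
      have : j = ⟨D, by omega⟩ := Fin.ext hj
      rw [this]; exact hv
    rw [hvj, mul_zero, mul_zero]
  · rw [padM_apply_colq A hj, hA i j (Or.inr (by omega))]

end MAPFA
namespace MAPFA

variable {D : ℕ}

/-- The uniform stochastic idempotent matrix. -/
noncomputable def Kmat (D : ℕ) : Matrix (Fin (D+2)) (Fin (D+2)) ℝ :=
  Matrix.of fun _ _ => ((D : ℝ) + 2)⁻¹

lemma Dpos : (0:ℝ) < (D : ℝ) + 2 := by positivity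

lemma Kmat_mul_Kmat : Kmat D * Kmat D = Kmat D := by
  ext i j
  simp only [Kmat, Matrix.mul_apply, Matrix.of_apply]
  rw [Finset.sum_const, Finset.card_univ, Fintype.card_fin, nsmul_eq_mul]
  have h : ((D:ℝ) + 2) ≠ 0 := ne_of_gt Dpos
  push_cast
  field_simp

lemma Kmat_mul {B : Matrix (Fin (D+2)) (Fin (D+2)) ℝ} (h : ∀ j, ∑ i, B i j = 0) :
    Kmat D * B = 0 := by
  ext i j
  simp only [Kmat, Matrix.mul_apply, Matrix.of_apply, Matrix.zero_apply]
  rw [← Finset.mul_sum, h j, mul_zero]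

lemma mul_Kmat {B : Matrix (Fin (D+2)) (Fin (D+2)) ℝ} (h : ∀ i, ∑ j, B i j = 0) :
    B * Kmat D = 0 := by
  ext i j
  simp only [Kmat, Matrix.mul_apply, Matrix.of_apply, Matrix.zero_apply]
  rw [← Finset.sum_mul, h i, zero_mul]

lemma tele {X Y : Matrix (Fin (D+2)) (Fin (D+2)) ℝ} (hXK : X * Kmat D = 0)
    (hKY : Kmat D * Y = 0) : (Kmat D + X) * (Kmat D + Y) = Kmat D + X * Y := by
  rw [add_mul, mul_add, mul_add, Kmat_mul_Kmat, hXK, hKY]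
  abel

lemma K_mul_pow_mul {X Y : Matrix (Fin (D+2)) (Fin (D+2)) ℝ} (hKX : Kmat D * X = 0)
    (hKY : Kmat D * Y = 0) (n : ℕ) : Kmat D * (X ^ n * Y) = 0 := by
  cases n with
  | zero => simpa using hKY
  | succ n =>
    rw [pow_succ', mul_assoc, ← mul_assoc (Kmat D), hKX, zero_mul]

lemma tele_pow {X Y : Matrix (Fin (D+2)) (Fin (D+2)) ℝ} (hXK : X * Kmat D = 0)
    (hKX : Kmat D * X = 0) (hKY : Kmat D * Y = 0) (n : ℕ) :
    (Kmat D + X) ^ n * (Kmat D + Y) = Kmat D + X ^ n * Y := by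
  induction n with
  | zero => simp
  | succ n ih =>
    rw [pow_succ', mul_assoc, ih, tele hXK (K_mul_pow_mul hKX hKY n), ← mul_assoc,
      ← pow_succ']

end MAPFA
namespace MAPFA

lemma fin_sum_single {N : ℕ} (f : Fin N → ℝ) (a : Fin N) (h : ∀ x, x ≠ a → f x = 0) :
    ∑ x, f x = f a :=
  Finset.sum_eq_single a (fun b _ hb => h b hb) (fun ha => absurd (Finset.mem_univ a) ha)

lemma fin_sum_pair {N : ℕ} (f : Fin N → ℝ) (a b : Fin N) (hab : a ≠ b)
    (h : ∀ x, x ≠ a → x ≠ b → f x = 0) : ∑ x, f x = f a + f b := by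
  rw [← Finset.sum_pair hab]
  refine (Finset.sum_subset (Finset.subset_univ _) ?_).symm
  intro x _ hx
  simp only [Finset.mem_insert, Finset.mem_singleton, not_or] at hx
  exact h x hx.1 hx.2

lemma fin_sum_triple {N : ℕ} (f : Fin N → ℝ) (a b c : Fin N) (hab : a ≠ b) (hac : a ≠ c)
    (hbc : b ≠ c) (h : ∀ x, x ≠ a → x ≠ b → x ≠ c → f x = 0) :
    ∑ x, f x = f a + f b + f c := by
  have h1 : ∑ x ∈ ({a, b, c} : Finset (Fin N)), f x = f a + (f b + f c) := by
    rw [Finset.sum_insert (by simp [hab, hac]), Finset.sum_pair hbc]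
  rw [← add_assoc] at h1
  rw [← h1]
  refine (Finset.sum_subset (Finset.subset_univ _) ?_).symm
  intro x _ hx
  simp only [Finset.mem_insert, Finset.mem_singleton, not_or] at hx
  exact h x hx.1 hx.2.1 hx.2.2

/-- total absolute sum of entries -/
noncomputable def tot {N : ℕ} (B : Matrix (Fin N) (Fin N) ℝ) : ℝ := ∑ i, ∑ j, |B i j|

lemma tot_nonneg {N : ℕ} (B : Matrix (Fin N) (Fin N) ℝ) : 0 ≤ tot B :=
  Finset.sum_nonneg fun i _ => Finset.sum_nonneg fun j _ => abs_nonneg _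

lemma abs_le_tot {N : ℕ} (B : Matrix (Fin N) (Fin N) ℝ) (i j : Fin N) : |B i j| ≤ tot B := by
  calc |B i j| ≤ ∑ b, |B i b| :=
        Finset.single_le_sum (fun b _ => abs_nonneg (B i b)) (Finset.mem_univ j)
    _ ≤ tot B :=
        Finset.single_le_sum (f := fun a => ∑ b, |B a b|)
          (fun a _ => Finset.sum_nonneg fun b _ => abs_nonneg _) (Finset.mem_univ i)

/-- making a stochastic matrix out of a zero-sum matrix -/
lemma mkStoch {D : ℕ} (B : Matrix (Fin (D+2)) (Fin (D+2)) ℝ)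
    (hcol : ∀ j, ∑ i, B i j = 0) (cv : ℝ) (hcv1 : 1 ≤ cv)
    (hcv : ∀ i j, ((D:ℝ) + 2) * |B i j| ≤ cv) :
    ColStochastic (Kmat D + cv⁻¹ • B) := by
  have hc0 : (0:ℝ) < cv := lt_of_lt_of_le one_pos hcv1
  have hD : (0:ℝ) < (D:ℝ) + 2 := Dpos
  constructor
  · intro i j
    simp only [Matrix.add_apply, Matrix.smul_apply, Kmat, Matrix.of_apply, smul_eq_mul]
    have h1 : |B i j| ≤ cv / ((D:ℝ) + 2) := by
      rw [le_div_iff₀ hD]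
      linarith [hcv i j]
    have h2 : -(cv / ((D:ℝ)+2)) ≤ B i j := by
      have := neg_abs_le (B i j)
      linarith
    have h3 : cv⁻¹ * (-(cv / ((D:ℝ)+2))) ≤ cv⁻¹ * B i j :=
      mul_le_mul_of_nonneg_left h2 (le_of_lt (inv_pos.mpr hc0))
    have h4 : cv⁻¹ * (-(cv / ((D:ℝ)+2))) = -(((D:ℝ)+2)⁻¹) := by
      field_simp
    rw [h4] at h3
    linarith
  · intro j
    simp only [Matrix.add_apply, Matrix.smul_apply, Kmat, Matrix.of_apply, smul_eq_mul]
    rw [Finset.sum_add_distrib, ← Finset.mul_sum, hcol j, mul_zero, add_zero,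
      Finset.sum_const, Finset.card_univ, Fintype.card_fin, nsmul_eq_mul]
    push_cast
    field_simp

end MAPFA
namespace MAPFA

/-! ### The concrete construction for a fixed `k` -/

/-- identity on the middle block -/
def idmid (k : ℕ) : Matrix (Fin (2*k+2+2)) (Fin (2*k+2+2)) ℝ :=
  Matrix.of fun i j => if i = j ∧ i.val < 2*k+2 then 1 else 0

/-- Pascal matrix on the middle block: entry `(r, c)` is `C(r, c)`. -/
def pasc (k : ℕ) : Matrix (Fin (2*k+2+2)) (Fin (2*k+2+2)) ℝ :=
  Matrix.of fun i j => if i.val < 2*k+2 ∧ j.val < 2*k+2 then (i.val.choose j.val : ℝ) else 0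

/-- middle matrix applied after the certificate -/
noncomputable def mmid (k : ℕ) : Matrix (Fin (2*k+2+2)) (Fin (2*k+2+2)) ℝ :=
  Matrix.of fun i j =>
    if i.val = 0 ∧ j.val = 0 then -1
    else if i.val = 1 ∧ j.val = k then 1
    else if i.val = 2 ∧ j.val = 0 then 1/2
    else if i.val = 2 ∧ j.val = 2*k then -1
    else 0

/-- final matrix: reads coordinate 2 into coordinate 0 -/
def dmid (k : ℕ) : Matrix (Fin (2*k+2+2)) (Fin (2*k+2+2)) ℝ :=
  Matrix.of fun i j => if i.val = 0 ∧ j.val = 2 then 1 else 0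

lemma midsupp_idmid (k : ℕ) : MidSupp (idmid k) := by
  intro i j h
  simp only [idmid, Matrix.of_apply]
  rw [if_neg]
  rintro ⟨rfl, hlt⟩
  omega

lemma midsupp_pasc (k : ℕ) : MidSupp (pasc k) := by
  intro i j h
  simp only [pasc, Matrix.of_apply]
  rw [if_neg]
  rintro ⟨h1, h2⟩
  omega

lemma midsupp_mmid (k : ℕ) (hk : 2 < k) : MidSupp (mmid k) := by
  intro i j h
  simp only [mmid, Matrix.of_apply]
  split_ifs with h1 h2 h3 h4 <;> first | rfl | omega

lemma midsupp_dmid (k : ℕ) (hk : 2 < k) : MidSupp (dmid k) := by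
  intro i j h
  simp only [dmid, Matrix.of_apply]
  split_ifs with h1 <;> first | rfl | omega

noncomputable def Bo (k : ℕ) := padM (idmid k)
noncomputable def Ba (k : ℕ) := padM (pasc k)
noncomputable def Bl (k : ℕ) := padM (mmid k)
noncomputable def Bc (k : ℕ) := padM (idmid k)
noncomputable def Bd (k : ℕ) := padM (dmid k)

noncomputable def cval (k : ℕ) : ℝ :=
  (((2*k+2 : ℕ) : ℝ) + 2) * (tot (Bo k) + tot (Ba k) + tot (Bl k) + tot (Bc k) + tot (Bd k)) + 1

lemma cval_ge_one (k : ℕ) : 1 ≤ cval k := by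
  have h0 : (0:ℝ) ≤ ((2*k+2 : ℕ) : ℝ) + 2 := by positivity
  have h1 := tot_nonneg (Bo k); have h2 := tot_nonneg (Ba k); have h3 := tot_nonneg (Bl k)
  have h4 := tot_nonneg (Bc k); have h5 := tot_nonneg (Bd k)
  have h6 : (0:ℝ) ≤ (((2*k+2 : ℕ) : ℝ) + 2) * (tot (Bo k) + tot (Ba k) + tot (Bl k) + tot (Bc k) + tot (Bd k)) :=
    mul_nonneg h0 (by linarith)
  simp only [cval]; linarith

lemma cval_pos (k : ℕ) : 0 < cval k := lt_of_lt_of_le one_pos (cval_ge_one k)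

lemma cval_bound (k : ℕ) (B : Matrix (Fin (2*k+2+2)) (Fin (2*k+2+2)) ℝ)
    (hB : tot B ≤ tot (Bo k) + tot (Ba k) + tot (Bl k) + tot (Bc k) + tot (Bd k)) :
    ∀ i j, (((2*k+2 : ℕ) : ℝ) + 2) * |B i j| ≤ cval k := by
  intro i j
  have h1 := abs_le_tot B i j
  have h0 : (0:ℝ) ≤ ((2*k+2 : ℕ) : ℝ) + 2 := by positivity
  have := mul_le_mul_of_nonneg_left (le_trans h1 hB) h0
  simp only [cval]; linarith

noncomputable def Co (k : ℕ) := Kmat (2*k+2) + (cval k)⁻¹ • Bo k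
noncomputable def Ca (k : ℕ) := Kmat (2*k+2) + (cval k)⁻¹ • Ba k
noncomputable def Cl (k : ℕ) := Kmat (2*k+2) + (cval k)⁻¹ • Bl k
noncomputable def Cc (k : ℕ) := Kmat (2*k+2) + (cval k)⁻¹ • Bc k
noncomputable def Cd (k : ℕ) := Kmat (2*k+2) + (cval k)⁻¹ • Bd k

lemma tot_le_sum₁ (k : ℕ) : tot (Bo k) ≤ tot (Bo k) + tot (Ba k) + tot (Bl k) + tot (Bc k) + tot (Bd k) := by
  have h2 := tot_nonneg (Ba k); have h3 := tot_nonneg (Bl k)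
  have h4 := tot_nonneg (Bc k); have h5 := tot_nonneg (Bd k); linarith

lemma tot_le_sum₂ (k : ℕ) : tot (Ba k) ≤ tot (Bo k) + tot (Ba k) + tot (Bl k) + tot (Bc k) + tot (Bd k) := by
  have h2 := tot_nonneg (Bo k); have h3 := tot_nonneg (Bl k)
  have h4 := tot_nonneg (Bc k); have h5 := tot_nonneg (Bd k); linarith

lemma tot_le_sum₃ (k : ℕ) : tot (Bl k) ≤ tot (Bo k) + tot (Ba k) + tot (Bl k) + tot (Bc k) + tot (Bd k) := by
  have h2 := tot_nonneg (Bo k); have h3 := tot_nonneg (Ba k)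
  have h4 := tot_nonneg (Bc k); have h5 := tot_nonneg (Bd k); linarith

lemma tot_le_sum₄ (k : ℕ) : tot (Bc k) ≤ tot (Bo k) + tot (Ba k) + tot (Bl k) + tot (Bc k) + tot (Bd k) := by
  have h2 := tot_nonneg (Bo k); have h3 := tot_nonneg (Ba k)
  have h4 := tot_nonneg (Bl k); have h5 := tot_nonneg (Bd k); linarith

lemma tot_le_sum₅ (k : ℕ) : tot (Bd k) ≤ tot (Bo k) + tot (Ba k) + tot (Bl k) + tot (Bc k) + tot (Bd k) := by
  have h2 := tot_nonneg (Bo k); have h3 := tot_nonneg (Ba k)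
  have h4 := tot_nonneg (Bl k); have h5 := tot_nonneg (Bc k); linarith

lemma stoch_Co (k : ℕ) : ColStochastic (Co k) :=
  mkStoch _ (padM_colsum _ (midsupp_idmid k)) _ (cval_ge_one k) (cval_bound k _ (tot_le_sum₁ k))

lemma stoch_Ca (k : ℕ) : ColStochastic (Ca k) :=
  mkStoch _ (padM_colsum _ (midsupp_pasc k)) _ (cval_ge_one k) (cval_bound k _ (tot_le_sum₂ k))

lemma stoch_Cl (k : ℕ) (hk : 2 < k) : ColStochastic (Cl k) :=
  mkStoch _ (padM_colsum _ (midsupp_mmid k hk)) _ (cval_ge_one k) (cval_bound k _ (tot_le_sum₃ k))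

lemma stoch_Cc (k : ℕ) : ColStochastic (Cc k) :=
  mkStoch _ (padM_colsum _ (midsupp_idmid k)) _ (cval_ge_one k) (cval_bound k _ (tot_le_sum₄ k))

lemma stoch_Cd (k : ℕ) (hk : 2 < k) : ColStochastic (Cd k) :=
  mkStoch _ (padM_colsum _ (midsupp_dmid k hk)) _ (cval_ge_one k) (cval_bound k _ (tot_le_sum₅ k))

/-- the accepting set: the first `k+2` states -/
def Fk (k : ℕ) : Finset (Fin (2*k+2+2)) :=
  Finset.map (Fin.castLEEmb (by omega : k+2 ≤ 2*k+2+2)) Finset.univ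

lemma mem_Fk {k : ℕ} {j : Fin (2*k+2+2)} : j ∈ Fk k ↔ j.val < k + 2 := by
  simp only [Fk, Finset.mem_map, Finset.mem_univ, true_and]
  constructor
  · rintro ⟨a, rfl⟩
    simpa using a.isLt
  · intro h
    exact ⟨⟨j.val, h⟩, by ext; simp⟩

lemma card_Fk (k : ℕ) : (Fk k).card = k + 2 := by
  simp [Fk]

end MAPFA
namespace MAPFA

lemma he1p (k : ℕ) : e1 (2*k+2+2) ⟨2*k+2, by omega⟩ = 0 := by
  simp [e1]

/- wrappers avoiding unfolding issues -/
lemma Bo_mid (k : ℕ) (v : Fin (2*k+2+2) → ℝ) (hv : v ⟨2*k+2, by omega⟩ = 0)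
    {j : Fin (2*k+2+2)} (hj : j.val < 2*k+2) : (Bo k *ᵥ v) j = (idmid k *ᵥ v) j :=
  padM_mulVec_mid _ (midsupp_idmid k) _ hv hj
lemma Ba_mid (k : ℕ) (v : Fin (2*k+2+2) → ℝ) (hv : v ⟨2*k+2, by omega⟩ = 0)
    {j : Fin (2*k+2+2)} (hj : j.val < 2*k+2) : (Ba k *ᵥ v) j = (pasc k *ᵥ v) j :=
  padM_mulVec_mid _ (midsupp_pasc k) _ hv hj
lemma Bl_mid (k : ℕ) (hk : 2 < k) (v : Fin (2*k+2+2) → ℝ) (hv : v ⟨2*k+2, by omega⟩ = 0)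
    {j : Fin (2*k+2+2)} (hj : j.val < 2*k+2) : (Bl k *ᵥ v) j = (mmid k *ᵥ v) j :=
  padM_mulVec_mid _ (midsupp_mmid k hk) _ hv hj
lemma Bc_mid (k : ℕ) (v : Fin (2*k+2+2) → ℝ) (hv : v ⟨2*k+2, by omega⟩ = 0)
    {j : Fin (2*k+2+2)} (hj : j.val < 2*k+2) : (Bc k *ᵥ v) j = (idmid k *ᵥ v) j :=
  padM_mulVec_mid _ (midsupp_idmid k) _ hv hj
lemma Bd_mid (k : ℕ) (hk : 2 < k) (v : Fin (2*k+2+2) → ℝ) (hv : v ⟨2*k+2, by omega⟩ = 0)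
    {j : Fin (2*k+2+2)} (hj : j.val < 2*k+2) : (Bd k *ᵥ v) j = (dmid k *ᵥ v) j :=
  padM_mulVec_mid _ (midsupp_dmid k hk) _ hv hj

lemma Bo_p (k : ℕ) (v : Fin (2*k+2+2) → ℝ) : (Bo k *ᵥ v) ⟨2*k+2, by omega⟩ = 0 :=
  padM_mulVec_p _ _
lemma Ba_p (k : ℕ) (v : Fin (2*k+2+2) → ℝ) : (Ba k *ᵥ v) ⟨2*k+2, by omega⟩ = 0 :=
  padM_mulVec_p _ _
lemma Bl_p (k : ℕ) (v : Fin (2*k+2+2) → ℝ) : (Bl k *ᵥ v) ⟨2*k+2, by omega⟩ = 0 :=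
  padM_mulVec_p _ _
lemma Bc_p (k : ℕ) (v : Fin (2*k+2+2) → ℝ) : (Bc k *ᵥ v) ⟨2*k+2, by omega⟩ = 0 :=
  padM_mulVec_p _ _
lemma Bd_p (k : ℕ) (v : Fin (2*k+2+2) → ℝ) : (Bd k *ᵥ v) ⟨2*k+2, by omega⟩ = 0 :=
  padM_mulVec_p _ _

/-- stage 1: after the left certificate marker -/
lemma v1_spec (k : ℕ) :
    (Bo k *ᵥ e1 (2*k+2+2)) ⟨2*k+2, by omega⟩ = 0 ∧
    ∀ j : Fin (2*k+2+2), j.val < 2*k+2 →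
      (Bo k *ᵥ e1 (2*k+2+2)) j = if j.val = 0 then 1 else 0 := by
  refine ⟨Bo_p k _, fun j hj => ?_⟩
  rw [Bo_mid k _ (he1p k) hj]
  simp only [Matrix.mulVec, dotProduct]
  rw [fin_sum_single _ j (fun x hx => by
    simp only [idmid, Matrix.of_apply]
    rw [if_neg (fun hc => hx (hc.1.symm)), zero_mul])]
  simp [idmid, e1, hj]

/-- stage 2: after reading the certificate `a^i` -/
lemma v2_spec (k : ℕ) (i : ℕ) :
    (Ba k ^ i *ᵥ (Bo k *ᵥ e1 (2*k+2+2))) ⟨2*k+2, by omega⟩ = 0 ∧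
    ∀ j : Fin (2*k+2+2), j.val < 2*k+2 →
      (Ba k ^ i *ᵥ (Bo k *ᵥ e1 (2*k+2+2))) j = (i:ℝ)^j.val := by
  induction i with
  | zero =>
    rw [pow_zero, Matrix.one_mulVec]
    refine ⟨(v1_spec k).1, fun j hj => ?_⟩
    rw [(v1_spec k).2 j hj]
    by_cases h0 : j.val = 0
    · simp [h0]
    · simp [h0, zero_pow h0]
  | succ i ih =>
    have hrw : Ba k ^ (i+1) *ᵥ (Bo k *ᵥ e1 (2*k+2+2))
        = Ba k *ᵥ (Ba k ^ i *ᵥ (Bo k *ᵥ e1 (2*k+2+2))) := by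
      rw [pow_succ', ← Matrix.mulVec_mulVec]
    constructor
    · rw [hrw]; exact Ba_p k _
    · intro j hj
      rw [hrw, Ba_mid k _ ih.1 hj]
      set w := Ba k ^ i *ᵥ (Bo k *ᵥ e1 (2*k+2+2)) with hwdef
      show ∑ c, pasc k j c * w c = _
      have hterm : ∀ c : Fin (2*k+2+2),
          pasc k j c * w c
          = (fun t => if t < 2*k+2 then ((j.val.choose t : ℕ) : ℝ) * (i:ℝ)^t else 0) c.val := by
        intro c
        by_cases hc : c.val < 2*k+2
        · simp only [pasc, Matrix.of_apply, if_pos (And.intro hj hc), if_pos hc,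
            ih.2 c hc]
        · simp only [pasc, Matrix.of_apply, if_neg (fun h : _ ∧ _ => hc h.2), if_neg hc,
            zero_mul]
      rw [Finset.sum_congr rfl (fun c _ => hterm c)]
      rw [Fin.sum_univ_eq_sum_range (fun t => if t < 2*k+2 then ((j.val.choose t : ℕ) : ℝ) * (i:ℝ)^t else 0) (2*k+2+2)]
      rw [← Finset.sum_subset (Finset.range_subset_range.mpr (by omega : j.val + 1 ≤ 2*k+2+2))
        (fun t ht hnt => by
          simp only [Finset.mem_range] at ht hnt
          by_cases htD : t < 2*k+2
          · rw [if_pos htD, Nat.choose_eq_zero_of_lt (by omega), Nat.cast_zero, zero_mul]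
          · rw [if_neg htD])]
      have hcg : ∀ t ∈ Finset.range (j.val + 1),
          (if t < 2*k+2 then ((j.val.choose t : ℕ) : ℝ) * (i:ℝ)^t else 0)
          = (i:ℝ)^t * 1^(j.val - t) * ((j.val.choose t : ℕ) : ℝ) := by
        intro t ht
        simp only [Finset.mem_range] at ht
        rw [if_pos (by omega), one_pow, mul_one]
        ring
      rw [Finset.sum_congr rfl hcg, ← add_pow]
      push_cast
      ring
end MAPFA
namespace MAPFA

/- entry evaluation lemmas -/
lemma mmid_row0 (k : ℕ) {r c : Fin (2*k+2+2)} (hr : r.val = 0) :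
    mmid k r c = if c.val = 0 then -1 else 0 := by
  by_cases hc : c.val = 0 <;> simp [mmid, hr, hc, -Fin.val_eq_zero_iff]

lemma mmid_row1 (k : ℕ) {r c : Fin (2*k+2+2)} (hr : r.val = 1) :
    mmid k r c = if c.val = k then 1 else 0 := by
  by_cases hc : c.val = k <;> simp [mmid, hr, hc, -Fin.val_eq_zero_iff]

lemma mmid_row2 (k : ℕ) {r c : Fin (2*k+2+2)} (hr : r.val = 2) :
    mmid k r c = if c.val = 0 then 1/2 else if c.val = 2*k then -1 else 0 := by
  by_cases hc0 : c.val = 0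
  · simp [mmid, hr, hc0, -Fin.val_eq_zero_iff]
  · by_cases hc2 : c.val = 2*k <;> simp [mmid, hr, hc0, hc2, -Fin.val_eq_zero_iff]

lemma idmid_diag (k : ℕ) {r : Fin (2*k+2+2)} (h : r.val < 2*k+2) : idmid k r r = 1 := by
  simp [idmid, h]

lemma idmid_off (k : ℕ) {r c : Fin (2*k+2+2)} (h : r ≠ c) : idmid k r c = 0 := by
  simp [idmid, h]

lemma dmid_row0 (k : ℕ) {r c : Fin (2*k+2+2)} (hr : r.val = 0) :
    dmid k r c = if c.val = 2 then 1 else 0 := by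
  by_cases hc : c.val = 2 <;> simp [dmid, hr, hc, -Fin.val_eq_zero_iff]

lemma dmid_off (k : ℕ) {r c : Fin (2*k+2+2)} (hr : r.val ≠ 0) : dmid k r c = 0 := by
  simp [dmid, hr, -Fin.val_eq_zero_iff]

lemma pasc_apply (k : ℕ) (r c : Fin (2*k+2+2)) :
    pasc k r c = if r.val < 2*k+2 ∧ c.val < 2*k+2 then ((r.val.choose c.val : ℕ) : ℝ) else 0 :=
  rfl

/-- stage 3+4: after the right certificate marker and the input left marker -/
lemma v4_spec (k : ℕ) (hk : 2 < k) (i : ℕ) :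
    (Bc k *ᵥ (Bl k *ᵥ (Ba k ^ i *ᵥ (Bo k *ᵥ e1 (2*k+2+2))))) ⟨2*k+2, by omega⟩ = 0 ∧
    (Bc k *ᵥ (Bl k *ᵥ (Ba k ^ i *ᵥ (Bo k *ᵥ e1 (2*k+2+2))))) ⟨0, by omega⟩ = -1 ∧
    (Bc k *ᵥ (Bl k *ᵥ (Ba k ^ i *ᵥ (Bo k *ᵥ e1 (2*k+2+2))))) ⟨1, by omega⟩ = (i:ℝ)^k ∧
    (Bc k *ᵥ (Bl k *ᵥ (Ba k ^ i *ᵥ (Bo k *ᵥ e1 (2*k+2+2))))) ⟨2, by omega⟩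
      = 1/2 - (i:ℝ)^(2*k) := by
  have hv := v2_spec k i
  set v := Ba k ^ i *ᵥ (Bo k *ᵥ e1 (2*k+2+2)) with hvdef
  set w := Bl k *ᵥ v with hwdef
  have hwp : w ⟨2*k+2, by omega⟩ = 0 := Bl_p k v
  have hw0 : w ⟨0, by omega⟩ = -1 := by
    rw [hwdef, Bl_mid k hk v hv.1 (by simp <;> omega : ((⟨0, by omega⟩ : Fin (2*k+2+2))).val < 2*k+2)]
    show ∑ c, mmid k ⟨0, by omega⟩ c * v c = _
    rw [fin_sum_single _ (⟨0, by omega⟩ : Fin (2*k+2+2)) (fun x hx => by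
      rw [mmid_row0 k (by simp <;> omega), if_neg (fun h => hx (Fin.ext (by simpa using h))), zero_mul])]
    rw [mmid_row0 k (by simp <;> omega), if_pos (by simp <;> omega), hv.2 ⟨0, by omega⟩ (by simp <;> omega)]
    simp
  have hw1 : w ⟨1, by omega⟩ = (i:ℝ)^k := by
    rw [hwdef, Bl_mid k hk v hv.1 (by simp <;> omega : ((⟨1, by omega⟩ : Fin (2*k+2+2))).val < 2*k+2)]
    show ∑ c, mmid k ⟨1, by omega⟩ c * v c = _
    rw [fin_sum_single _ (⟨k, by omega⟩ : Fin (2*k+2+2)) (fun x hx => by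
      rw [mmid_row1 k (by simp <;> omega), if_neg (fun h => hx (Fin.ext (by simpa using h))), zero_mul])]
    rw [mmid_row1 k (by simp <;> omega), if_pos (by simp <;> omega), hv.2 ⟨k, by omega⟩ (by simp <;> omega), one_mul]
  have hw2 : w ⟨2, by omega⟩ = 1/2 - (i:ℝ)^(2*k) := by
    rw [hwdef, Bl_mid k hk v hv.1 (by simp <;> omega : ((⟨2, by omega⟩ : Fin (2*k+2+2))).val < 2*k+2)]
    show ∑ c, mmid k ⟨2, by omega⟩ c * v c = _
    rw [fin_sum_pair _ (⟨0, by omega⟩ : Fin (2*k+2+2)) (⟨2*k, by omega⟩ : Fin (2*k+2+2))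
      (Fin.ne_of_val_ne (by simp <;> omega))
      (fun x hx0 hx2 => by
        rw [mmid_row2 k (by simp <;> omega),
          if_neg (fun h => hx0 (Fin.ext (by simpa using h))),
          if_neg (fun h => hx2 (Fin.ext (by simpa using h))), zero_mul])]
    rw [mmid_row2 k (by simp <;> omega), mmid_row2 k (by simp <;> omega), if_pos (by simp <;> omega),
      if_neg (by simp <;> omega), if_pos (by simp <;> omega)]
    rw [hv.2 ⟨0, by omega⟩ (by simp <;> omega), hv.2 ⟨2*k, by omega⟩ (by simp <;> omega)]
    simp
    ring
  refine ⟨Bc_p k _, ?_, ?_, ?_⟩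
  · rw [Bc_mid k w hwp (by simp <;> omega : ((⟨0, by omega⟩ : Fin (2*k+2+2))).val < 2*k+2)]
    show ∑ c, idmid k ⟨0, by omega⟩ c * w c = _
    rw [fin_sum_single _ (⟨0, by omega⟩ : Fin (2*k+2+2)) (fun x hx => by
      rw [idmid_off k (Ne.symm hx), zero_mul]),
      idmid_diag k (by simp <;> omega), one_mul, hw0]
  · rw [Bc_mid k w hwp (by simp <;> omega : ((⟨1, by omega⟩ : Fin (2*k+2+2))).val < 2*k+2)]
    show ∑ c, idmid k ⟨1, by omega⟩ c * w c = _
    rw [fin_sum_single _ (⟨1, by omega⟩ : Fin (2*k+2+2)) (fun x hx => by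
      rw [idmid_off k (Ne.symm hx), zero_mul]),
      idmid_diag k (by simp <;> omega), one_mul, hw1]
  · rw [Bc_mid k w hwp (by simp <;> omega : ((⟨2, by omega⟩ : Fin (2*k+2+2))).val < 2*k+2)]
    show ∑ c, idmid k ⟨2, by omega⟩ c * w c = _
    rw [fin_sum_single _ (⟨2, by omega⟩ : Fin (2*k+2+2)) (fun x hx => by
      rw [idmid_off k (Ne.symm hx), zero_mul]),
      idmid_diag k (by simp <;> omega), one_mul, hw2]

/-- stage 5: after reading the input `a^n` -/
lemma v5_spec (k : ℕ) (hk : 2 < k) (i n : ℕ) :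
    (Ba k ^ n *ᵥ (Bc k *ᵥ (Bl k *ᵥ (Ba k ^ i *ᵥ (Bo k *ᵥ e1 (2*k+2+2)))))) ⟨2*k+2, by omega⟩ = 0 ∧
    (Ba k ^ n *ᵥ (Bc k *ᵥ (Bl k *ᵥ (Ba k ^ i *ᵥ (Bo k *ᵥ e1 (2*k+2+2)))))) ⟨0, by omega⟩ = -1 ∧
    (Ba k ^ n *ᵥ (Bc k *ᵥ (Bl k *ᵥ (Ba k ^ i *ᵥ (Bo k *ᵥ e1 (2*k+2+2)))))) ⟨1, by omega⟩
      = (i:ℝ)^k - n ∧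
    (Ba k ^ n *ᵥ (Bc k *ᵥ (Bl k *ᵥ (Ba k ^ i *ᵥ (Bo k *ᵥ e1 (2*k+2+2)))))) ⟨2, by omega⟩
      = 1/2 - ((n:ℝ) - (i:ℝ)^k)^2 := by
  induction n with
  | zero =>
    rw [pow_zero, Matrix.one_mulVec]
    obtain ⟨h1, h2, h3, h4⟩ := v4_spec k hk i
    refine ⟨h1, h2, by rw [h3]; simp, by
      rw [h4]
      have hp : (i:ℝ)^(2*k) = ((i:ℝ)^k)^2 := by rw [mul_comm, pow_mul]
      rw [hp]
      push_cast
      ring⟩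
  | succ n ih =>
    obtain ⟨ihp, ih0, ih1, ih2⟩ := ih
    have hrw : Ba k ^ (n+1) *ᵥ (Bc k *ᵥ (Bl k *ᵥ (Ba k ^ i *ᵥ (Bo k *ᵥ e1 (2*k+2+2)))))
        = Ba k *ᵥ (Ba k ^ n *ᵥ (Bc k *ᵥ (Bl k *ᵥ (Ba k ^ i *ᵥ (Bo k *ᵥ e1 (2*k+2+2)))))) := by
      rw [pow_succ', ← Matrix.mulVec_mulVec]
    set w := Ba k ^ n *ᵥ (Bc k *ᵥ (Bl k *ᵥ (Ba k ^ i *ᵥ (Bo k *ᵥ e1 (2*k+2+2))))) with hwdef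
    refine ⟨by rw [hrw]; exact Ba_p k _, ?_, ?_, ?_⟩
    · rw [hrw, Ba_mid k w ihp (by simp <;> omega : ((⟨0, by omega⟩ : Fin (2*k+2+2))).val < 2*k+2)]
      show ∑ c, pasc k ⟨0, by omega⟩ c * w c = _
      rw [fin_sum_single _ (⟨0, by omega⟩ : Fin (2*k+2+2)) (fun x hx => by
        have hxv : x.val ≠ 0 := fun h => hx (Fin.ext (by simpa using h))
        rw [pasc_apply]
        by_cases hc : x.val < 2*k+2
        · rw [if_pos (by simp <;> omega), Nat.choose_eq_zero_of_lt (by show (0:ℕ) < x.val; omega),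
            Nat.cast_zero, zero_mul]
        · rw [if_neg (fun h => hc h.2), zero_mul])]
      rw [pasc_apply, if_pos (by simp <;> omega), ih0]
      norm_num
    · rw [hrw, Ba_mid k w ihp (by simp <;> omega : ((⟨1, by omega⟩ : Fin (2*k+2+2))).val < 2*k+2)]
      show ∑ c, pasc k ⟨1, by omega⟩ c * w c = _
      rw [fin_sum_pair _ (⟨0, by omega⟩ : Fin (2*k+2+2)) (⟨1, by omega⟩ : Fin (2*k+2+2))
        (Fin.ne_of_val_ne (by simp <;> omega))
        (fun x hx0 hx1 => by
          have hxv0 : x.val ≠ 0 := fun h => hx0 (Fin.ext (by simpa using h))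
          have hxv1 : x.val ≠ 1 := fun h => hx1 (Fin.ext (by simpa using h))
          rw [pasc_apply]
          by_cases hc : x.val < 2*k+2
          · rw [if_pos (by simp <;> omega), Nat.choose_eq_zero_of_lt (by simp <;> omega),
              Nat.cast_zero, zero_mul]
          · rw [if_neg (fun h => hc h.2), zero_mul])]
      rw [pasc_apply, pasc_apply, if_pos (by simp <;> omega), if_pos (by simp <;> omega), ih0, ih1]
      push_cast
      norm_num
      ring
    · rw [hrw, Ba_mid k w ihp (by simp <;> omega : ((⟨2, by omega⟩ : Fin (2*k+2+2))).val < 2*k+2)]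
      show ∑ c, pasc k ⟨2, by omega⟩ c * w c = _
      rw [fin_sum_triple _ (⟨0, by omega⟩ : Fin (2*k+2+2)) (⟨1, by omega⟩ : Fin (2*k+2+2))
        (⟨2, by omega⟩ : Fin (2*k+2+2))
        (Fin.ne_of_val_ne (by simp <;> omega))
        (Fin.ne_of_val_ne (by simp <;> omega))
        (Fin.ne_of_val_ne (by simp <;> omega))
        (fun x hx0 hx1 hx2 => by
          have hxv0 : x.val ≠ 0 := fun h => hx0 (Fin.ext (by simpa using h))
          have hxv1 : x.val ≠ 1 := fun h => hx1 (Fin.ext (by simpa using h))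
          have hxv2 : x.val ≠ 2 := fun h => hx2 (Fin.ext (by simpa using h))
          rw [pasc_apply]
          by_cases hc : x.val < 2*k+2
          · rw [if_pos (by simp <;> omega), Nat.choose_eq_zero_of_lt (by simp <;> omega),
              Nat.cast_zero, zero_mul]
          · rw [if_neg (fun h => hc h.2), zero_mul])]
      rw [pasc_apply, pasc_apply, pasc_apply, if_pos (by simp <;> omega), if_pos (by simp <;> omega),
        if_pos (by simp <;> omega), ih0, ih1, ih2]
      push_cast
      norm_num
      ring

/-- final: the accepting sum over F -/
lemma S_spec (k : ℕ) (hk : 2 < k) (i n : ℕ) :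
    ∑ j ∈ Fk k, (Bd k *ᵥ (Ba k ^ n *ᵥ (Bc k *ᵥ (Bl k *ᵥ (Ba k ^ i *ᵥ (Bo k *ᵥ e1 (2*k+2+2))))))) j
      = 1/2 - ((n:ℝ) - (i:ℝ)^k)^2 := by
  obtain ⟨hp, h0, h1, h2⟩ := v5_spec k hk i n
  set w := Ba k ^ n *ᵥ (Bc k *ᵥ (Bl k *ᵥ (Ba k ^ i *ᵥ (Bo k *ᵥ e1 (2*k+2+2))))) with hwdef
  have hmem : (⟨0, by omega⟩ : Fin (2*k+2+2)) ∈ Fk k := mem_Fk.mpr (by simp <;> omega)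
  rw [Finset.sum_eq_single_of_mem ⟨0, by omega⟩ hmem (fun j hj hj0 => by
    have hjv : j.val < k + 2 := mem_Fk.mp hj
    have hjv0 : j.val ≠ 0 := fun h => hj0 (Fin.ext (by simpa using h))
    rw [Bd_mid k hk w hp (by omega)]
    show ∑ c, dmid k j c * w c = 0
    exact Finset.sum_eq_zero fun c _ => by rw [dmid_off k hjv0, zero_mul])]
  rw [Bd_mid k hk w hp (by simp <;> omega : ((⟨0, by omega⟩ : Fin (2*k+2+2))).val < 2*k+2)]
  show ∑ c, dmid k ⟨0, by omega⟩ c * w c = _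
  rw [fin_sum_single _ (⟨2, by omega⟩ : Fin (2*k+2+2)) (fun x hx => by
    rw [dmid_row0 k (by simp <;> omega), if_neg (fun h => hx (Fin.ext (by simpa using h))), zero_mul]),
    dmid_row0 k (by simp <;> omega), if_pos (by simp <;> omega), one_mul, h2]
end MAPFA
namespace MAPFA

lemma smul_collect {N : ℕ} (s : ℝ) (A B C D E : Matrix (Fin N) (Fin N) ℝ) (n i : ℕ) :
    (s • A) * ((s • B)^n * ((s • C) * ((s • D) * ((s • B)^i * (s • E)))))
      = s^(n+i+4) • (A * (B^n * (C * (D * (B^i * E))))) := by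
  simp only [smul_pow, smul_mul_assoc, mul_smul_comm, smul_smul]
  congr 1
  ring

lemma prod_eq (k : ℕ) (hk : 2 < k) (n i : ℕ) :
    Cd k * Ca k ^ n * Cc k * Cl k * Ca k ^ i * Co k
      = Kmat (2*k+2) + ((cval k)⁻¹)^(n+i+4) •
        (Bd k * (Ba k ^ n * (Bc k * (Bl k * (Ba k ^ i * Bo k))))) := by
  have hKBo : Kmat (2*k+2) * Bo k = 0 := Kmat_mul (padM_colsum _ (midsupp_idmid k))
  have hKBa : Kmat (2*k+2) * Ba k = 0 := Kmat_mul (padM_colsum _ (midsupp_pasc k))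
  have hKBl : Kmat (2*k+2) * Bl k = 0 := Kmat_mul (padM_colsum _ (midsupp_mmid k hk))
  have hKBc : Kmat (2*k+2) * Bc k = 0 := Kmat_mul (padM_colsum _ (midsupp_idmid k))
  have hKBd : Kmat (2*k+2) * Bd k = 0 := Kmat_mul (padM_colsum _ (midsupp_dmid k hk))
  have hBaK : Ba k * Kmat (2*k+2) = 0 := mul_Kmat (padM_rowsum _ (midsupp_pasc k))
  have hBlK : Bl k * Kmat (2*k+2) = 0 := mul_Kmat (padM_rowsum _ (midsupp_mmid k hk))
  have hBcK : Bc k * Kmat (2*k+2) = 0 := mul_Kmat (padM_rowsum _ (midsupp_idmid k))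
  have hBdK : Bd k * Kmat (2*k+2) = 0 := mul_Kmat (padM_rowsum _ (midsupp_dmid k hk))
  set s : ℝ := (cval k)⁻¹ with hs
  have hKXo : Kmat (2*k+2) * (s • Bo k) = 0 := by rw [mul_smul_comm, hKBo, smul_zero]
  have hKXa : Kmat (2*k+2) * (s • Ba k) = 0 := by rw [mul_smul_comm, hKBa, smul_zero]
  have hKXl : Kmat (2*k+2) * (s • Bl k) = 0 := by rw [mul_smul_comm, hKBl, smul_zero]
  have hKXc : Kmat (2*k+2) * (s • Bc k) = 0 := by rw [mul_smul_comm, hKBc, smul_zero]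
  have hXaK : (s • Ba k) * Kmat (2*k+2) = 0 := by rw [smul_mul_assoc, hBaK, smul_zero]
  have hXlK : (s • Bl k) * Kmat (2*k+2) = 0 := by rw [smul_mul_assoc, hBlK, smul_zero]
  have hXcK : (s • Bc k) * Kmat (2*k+2) = 0 := by rw [smul_mul_assoc, hBcK, smul_zero]
  have hXdK : (s • Bd k) * Kmat (2*k+2) = 0 := by rw [smul_mul_assoc, hBdK, smul_zero]
  have h1 : Kmat (2*k+2) * ((s • Ba k) ^ i * (s • Bo k)) = 0 := K_mul_pow_mul hKXa hKXo i
  have h2 : Kmat (2*k+2) * ((s • Bl k) * ((s • Ba k) ^ i * (s • Bo k))) = 0 := by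
    rw [← mul_assoc, hKXl, zero_mul]
  have h3 : Kmat (2*k+2) * ((s • Bc k) * ((s • Bl k) * ((s • Ba k) ^ i * (s • Bo k)))) = 0 := by
    rw [← mul_assoc, hKXc, zero_mul]
  have h4 : Kmat (2*k+2) * ((s • Ba k) ^ n * ((s • Bc k) * ((s • Bl k) * ((s • Ba k) ^ i * (s • Bo k))))) = 0 :=
    K_mul_pow_mul hKXa h3 n
  show (Kmat (2*k+2) + s • Bd k) * (Kmat (2*k+2) + s • Ba k) ^ n * (Kmat (2*k+2) + s • Bc k)
      * (Kmat (2*k+2) + s • Bl k) * (Kmat (2*k+2) + s • Ba k) ^ i * (Kmat (2*k+2) + s • Bo k) = _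
  rw [mul_assoc _ _ (Kmat (2*k+2) + s • Bo k)]
  rw [tele_pow hXaK hKXa hKXo i]
  rw [mul_assoc _ _ (Kmat (2*k+2) + (s • Ba k) ^ i * (s • Bo k))]
  rw [tele hXlK h1]
  rw [mul_assoc _ _ (Kmat (2*k+2) + (s • Bl k) * ((s • Ba k) ^ i * (s • Bo k)))]
  rw [tele hXcK h2]
  rw [mul_assoc _ _ (Kmat (2*k+2) + (s • Bc k) * _)]
  rw [tele_pow hXaK hKXa h3 n]
  rw [tele hXdK h4, smul_collect]

lemma Kv (k : ℕ) (j : Fin (2*k+2+2)) :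
    (Kmat (2*k+2) *ᵥ e1 (2*k+2+2)) j = (((2*k+2 : ℕ):ℝ)+2)⁻¹ := by
  show ∑ l, Kmat (2*k+2) j l * e1 (2*k+2+2) l = _
  rw [fin_sum_single _ (⟨0, by omega⟩ : Fin (2*k+2+2)) (fun x hx => by
    have hxv : x.val ≠ 0 := fun h => hx (Fin.ext (by simpa using h))
    simp [e1, hxv])]
  simp [Kmat, e1]

lemma acc_eq (k : ℕ) (hk : 2 < k) (i n : ℕ) :
    pfaAcc (Co k) (Ca k) (Cl k) (Cc k) (Cd k) (Fk k) i n
      = 1/2 + ((cval k)⁻¹)^(n+i+4) * (1/2 - ((n:ℝ) - (i:ℝ)^k)^2) := by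
  unfold pfaAcc
  rw [prod_eq k hk n i]
  simp only [Matrix.add_mulVec, Matrix.smul_mulVec, Pi.add_apply, Pi.smul_apply,
    smul_eq_mul]
  rw [Finset.sum_add_distrib]
  have hfirst : ∑ j ∈ Fk k, (Kmat (2*k+2) *ᵥ e1 (2*k+2+2)) j = 1/2 := by
    rw [Finset.sum_congr rfl (fun j _ => Kv k j), Finset.sum_const, card_Fk, nsmul_eq_mul]
    push_cast
    rw [eq_div_iff (by norm_num : (2:ℝ) ≠ 0)]
    rw [inv_eq_one_div]
    field_simp
    ring
  rw [hfirst, ← Finset.mul_sum]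
  have hS := S_spec k hk i n
  simp only [Matrix.mulVec_mulVec] at hS
  rw [hS]

end MAPFA

/-- for every `k > 2`, some unary MA-PFA verifies `UPOLY(k) = { a^(i^k) }`
with cutpoint 1/2, using certificates of length `n^(1/k)` for members. -/
theorem mapfa_upoly (k : ℕ) (hk : 2 < k) :
    ∃ (m : ℕ) (Ao Aa Acl Ace Ad : Matrix (Fin m) (Fin m) ℝ) (F : Finset (Fin m)),
      ColStochastic Ao ∧ ColStochastic Aa ∧ ColStochastic Acl ∧
      ColStochastic Ace ∧ ColStochastic Ad ∧
      (∀ i : ℕ, 1 / 2 < pfaAcc Ao Aa Acl Ace Ad F i (i ^ k)) ∧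
      (∀ n : ℕ, (¬ ∃ i : ℕ, n = i ^ k) → ∀ i : ℕ,
        pfaAcc Ao Aa Acl Ace Ad F i n ≤ 1 / 2) := by
  refine ⟨2*k+2+2, MAPFA.Co k, MAPFA.Ca k, MAPFA.Cl k, MAPFA.Cc k, MAPFA.Cd k, MAPFA.Fk k,
    MAPFA.stoch_Co k, MAPFA.stoch_Ca k, MAPFA.stoch_Cl k hk, MAPFA.stoch_Cc k,
    MAPFA.stoch_Cd k hk, ?_, ?_⟩
  · intro i
    rw [MAPFA.acc_eq k hk i (i^k)]
    have hs : 0 < ((MAPFA.cval k)⁻¹)^(i^k+i+4) :=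
      pow_pos (inv_pos.mpr (MAPFA.cval_pos k)) _
    have hcast : ((i^k : ℕ) : ℝ) = (i:ℝ)^k := by push_cast; ring
    rw [hcast]
    have hzero : ((i:ℝ)^k - (i:ℝ)^k) = 0 := by ring
    rw [hzero]
    nlinarith [hs]
  · intro n hn i
    rw [MAPFA.acc_eq k hk i n]
    have hne : n ≠ i^k := fun h => hn ⟨i, h⟩
    have hz : ((n:ℤ) - (i^k : ℕ)) ≠ 0 := by
      intro h
      apply hne
      omega
    have h1 : (1:ℤ) ≤ ((n:ℤ) - (i^k:ℕ))^2 := by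
      nlinarith [Int.one_le_abs hz, sq_abs ((n:ℤ) - (i^k:ℕ)), abs_nonneg ((n:ℤ) - (i^k:ℕ))]
    have h1R : (1:ℝ) ≤ ((n:ℝ) - (i:ℝ)^k)^2 := by
      have hc : ((n:ℝ) - (i:ℝ)^k) = (((n:ℤ) - (i^k:ℕ) : ℤ) : ℝ) := by push_cast; ring
      rw [hc]
      exact_mod_cast h1
    have hs : 0 ≤ ((MAPFA.cval k)⁻¹)^(n+i+4) :=
      pow_nonneg (inv_nonneg.mpr (le_of_lt (MAPFA.cval_pos k))) _
    nlinarith [mul_nonpos_of_nonneg_of_nonpos hs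
      (by linarith : (1/2 - ((n:ℝ) - (i:ℝ)^k)^2) ≤ 0)]
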